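/- For all x, y > 0, the function 1/(x·y) satisfies the pointwise bound 1/(x·y) ≤ 4·∑_{m,n ∈ ℤ} ⟨δ_0⟩_{I_m × I_n} · 𝟙_{I_m × I_n}(x,y), where I_m = [0, 2^m) and ⟨δ_0⟩_{R} = δ_0(R)/|R|. Moreover, the collection {I_m × I_n : m, n ∈ ℤ} is 1/4-sparse. -/
import Mathlib


open MeasureTheory
open scoped ENNReal

/-- The dyadic interval `I_m = [0, 2^m)`. -/
noncomputable def Iint (m : ℤ) : Set ℝ := Set.Ico 0 ((2 : ℝ) ^ m)

/-- An `η`-sparse collection of sets: each `R` has a major subset `E R` of measure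
at least `η·|R|`, and these major subsets are pairwise disjoint. -/
def IsSparseColl (η : ℝ) (S : Set (Set (ℝ × ℝ))) : Prop :=
  ∃ E : Set (ℝ × ℝ) → Set (ℝ × ℝ),
    (∀ R ∈ S, E R ⊆ R ∧ ENNReal.ofReal η * volume R ≤ volume (E R)) ∧
    S.PairwiseDisjoint E

/-- The "upper-right corner" of a rectangle, defined intrinsically. -/
def Efun (R : Set (ℝ × ℝ)) : Set (ℝ × ℝ) :=
  {p ∈ R | (2 * p.1, p.2) ∉ R ∧ (p.1, 2 * p.2) ∉ R}

lemma two_zpow_pos (m : ℤ) : (0:ℝ) < 2 ^ m := zpow_pos two_pos m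

lemma two_zpow_succ (m : ℤ) : (2:ℝ) ^ m = 2 * 2 ^ (m - 1) := by
  rw [show m = (m - 1) + 1 by ring, zpow_add_one₀ (two_ne_zero)]
  ring_nf

lemma Efun_eq (m n : ℤ) :
    Efun (Iint m ×ˢ Iint n) =
      Set.Ico ((2:ℝ) ^ (m - 1)) (2 ^ m) ×ˢ Set.Ico ((2:ℝ) ^ (n - 1)) (2 ^ n) := by
  ext ⟨x, y⟩
  simp only [Efun, Iint, Set.mem_setOf_eq, Set.mem_prod, Set.mem_Ico, not_and, not_lt]
  constructor
  · rintro ⟨⟨⟨hx0, hxm⟩, hy0, hyn⟩, h1, h2⟩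
    have hx' : (2:ℝ) ^ (m - 1) ≤ x := by
      by_contra hc
      push_neg at hc
      have := h1 ⟨by linarith, by rw [two_zpow_succ m]; linarith⟩ hy0
      linarith
    have hy' : (2:ℝ) ^ (n - 1) ≤ y := by
      by_contra hc
      push_neg at hc
      have := h2 ⟨hx0, hxm⟩ (by linarith)
      rw [two_zpow_succ n] at this
      linarith
    exact ⟨⟨hx', hxm⟩, hy', hyn⟩
  · rintro ⟨⟨hx1, hxm⟩, hy1, hyn⟩
    have hmp := two_zpow_pos (m - 1)
    have hnp := two_zpow_pos (n - 1)
    refine ⟨⟨⟨by linarith, hxm⟩, by linarith, hyn⟩, ?_, ?_⟩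
    · intro h _
      exfalso
      rw [two_zpow_succ m] at h
      linarith [h.2]
    · intro _ _
      rw [two_zpow_succ n]
      linarith

lemma Ico_dyadic_disjoint {m m' : ℤ} (h : m ≠ m') :
    Disjoint (Set.Ico ((2:ℝ) ^ (m - 1)) (2 ^ m)) (Set.Ico ((2:ℝ) ^ (m' - 1)) (2 ^ m')) := by
  wlog hlt : m < m' generalizing m m'
  · exact (this h.symm (by omega)).symm
  rw [Set.disjoint_left]
  rintro x ⟨_, hx2⟩ ⟨hx3, _⟩
  have : (2:ℝ) ^ m ≤ 2 ^ (m' - 1) := by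
    apply zpow_le_zpow_right₀ one_le_two; omega
  linarith

/-- For `x, y > 0` one has `1/(xy) ≤ 4·∑_{m,n} ⟨δ₀⟩_{I_m × I_n} 𝟙_{I_m × I_n}(x,y)`,
and the collection `{I_m × I_n}` is `1/4`-sparse. -/
theorem stmt1 :
    (∀ x y : ℝ, 0 < x → 0 < y →
      ENNReal.ofReal (1 / (x * y)) ≤
        4 * ∑' m : ℤ, ∑' n : ℤ,
          (Measure.dirac ((0 : ℝ), (0 : ℝ)) (Iint m ×ˢ Iint n) / volume (Iint m ×ˢ Iint n)) *
            (Iint m ×ˢ Iint n).indicator (fun _ => (1 : ℝ≥0∞)) (x, y)) ∧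
    IsSparseColl (1 / 4) {R | ∃ m n : ℤ, R = Iint m ×ˢ Iint n} := by
  have hvol : ∀ m : ℤ, volume (Iint m) = ENNReal.ofReal ((2:ℝ) ^ m) := by
    intro m; simp [Iint]
  have hvolR : ∀ m n : ℤ, volume (Iint m ×ˢ Iint n)
      = ENNReal.ofReal ((2:ℝ) ^ m * 2 ^ n) := by
    intro m n
    rw [Measure.volume_eq_prod, Measure.prod_prod, hvol, hvol,
      ENNReal.ofReal_mul (le_of_lt (two_zpow_pos m))]
  constructor
  · intro x y hx hy
    obtain ⟨m, hm1, hm2⟩ := exists_mem_Ico_zpow hx one_lt_two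
    obtain ⟨n, hn1, hn2⟩ := exists_mem_Ico_zpow hy one_lt_two
    set f : ℤ → ℤ → ℝ≥0∞ := fun m n =>
      (Measure.dirac ((0 : ℝ), (0 : ℝ)) (Iint m ×ˢ Iint n) / volume (Iint m ×ˢ Iint n)) *
        (Iint m ×ˢ Iint n).indicator (fun _ => (1 : ℝ≥0∞)) (x, y) with hf
    have key : ENNReal.ofReal (1 / (x * y)) ≤ 4 * f (m + 1) (n + 1) := by
      have hmem : ((x : ℝ), (y : ℝ)) ∈ Iint (m + 1) ×ˢ Iint (n + 1) := by
        constructor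
        · exact ⟨le_of_lt hx, hm2⟩
        · exact ⟨le_of_lt hy, hn2⟩
      have hd : Measure.dirac ((0 : ℝ), (0 : ℝ)) (Iint (m+1) ×ˢ Iint (n+1)) = 1 := by
        apply Measure.dirac_apply_of_mem
        exact ⟨⟨le_refl 0, two_zpow_pos _⟩, ⟨le_refl 0, two_zpow_pos _⟩⟩
      have hind : (Iint (m+1) ×ˢ Iint (n+1)).indicator (fun _ => (1 : ℝ≥0∞)) (x, y) = 1 :=
        Set.indicator_of_mem hmem _
      have hfval : f (m + 1) (n + 1) = (ENNReal.ofReal ((2:ℝ) ^ (m+1) * 2 ^ (n+1)))⁻¹ := by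
        rw [hf]; simp only []
        rw [hd, hvolR, hind, mul_one, one_div]
      rw [hfval]
      have hprodpos : (0:ℝ) < 2 ^ (m+1) * 2 ^ (n+1) :=
        mul_pos (two_zpow_pos _) (two_zpow_pos _)
      rw [← ENNReal.ofReal_inv_of_pos hprodpos]
      have h4 : (4 : ℝ≥0∞) = ENNReal.ofReal (4:ℝ) := by norm_num
      rw [h4, ← ENNReal.ofReal_mul (by norm_num)]
      apply ENNReal.ofReal_le_ofReal
      have hxy : (2:ℝ) ^ (m+1) * 2 ^ (n+1) ≤ 4 * (x * y) := by
        have e1 : (2:ℝ) ^ (m+1) = 2 * 2 ^ m := by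
          rw [zpow_add_one₀ (two_ne_zero : (2:ℝ) ≠ 0)]; ring
        have e2 : (2:ℝ) ^ (n+1) = 2 * 2 ^ n := by
          rw [zpow_add_one₀ (two_ne_zero : (2:ℝ) ≠ 0)]; ring
        rw [e1, e2]
        nlinarith [two_zpow_pos m, two_zpow_pos n]
      rw [show (4:ℝ) * ((2:ℝ)^(m+1) * 2^(n+1))⁻¹ = 4 / ((2:ℝ)^(m+1) * 2^(n+1)) by ring,
        div_le_div_iff₀ (mul_pos hx hy) hprodpos]
      linarith
    refine key.trans ?_
    gcongr
    calc f (m+1) (n+1) ≤ ∑' n', f (m+1) n' := ENNReal.le_tsum _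
      _ ≤ ∑' m', ∑' n', f m' n' := ENNReal.le_tsum (f := fun m' => ∑' n', f m' n') _
  · refine ⟨Efun, ?_, ?_⟩
    · rintro R ⟨m, n, rfl⟩
      constructor
      · intro p hp; exact hp.1
      · rw [Efun_eq, hvolR, Measure.volume_eq_prod, Measure.prod_prod]
        have h1 : volume (Set.Ico ((2:ℝ) ^ (m-1)) (2 ^ m)) = ENNReal.ofReal ((2:ℝ)^(m-1)) := by
          rw [Real.volume_Ico]
          congr 1
          rw [two_zpow_succ m]; ring
        have h2 : volume (Set.Ico ((2:ℝ) ^ (n-1)) (2 ^ n)) = ENNReal.ofReal ((2:ℝ)^(n-1)) := by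
          rw [Real.volume_Ico]
          congr 1
          rw [two_zpow_succ n]; ring
        rw [h1, h2, ← ENNReal.ofReal_mul (by norm_num),
          ← ENNReal.ofReal_mul (le_of_lt (two_zpow_pos _))]
        apply ENNReal.ofReal_le_ofReal
        rw [two_zpow_succ m, two_zpow_succ n]
        nlinarith [two_zpow_pos (m-1), two_zpow_pos (n-1)]
    · rintro R ⟨m, n, rfl⟩ R' ⟨m', n', rfl⟩ hne
      simp only [Function.onFun]
      rw [Efun_eq, Efun_eq]
      have hpair : m ≠ m' ∨ n ≠ n' := by
        by_contra h
        push_neg at h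
        exact hne (by rw [h.1, h.2])
      rw [Set.disjoint_left]
      rintro ⟨x, y⟩ ⟨hx, hy⟩ ⟨hx', hy'⟩
      rcases hpair with h | h
      · exact (Ico_dyadic_disjoint h).le_bot ⟨hx, hx'⟩
      · exact (Ico_dyadic_disjoint h).le_bot ⟨hy, hy'⟩
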